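/- For every real λ ≥ 0 there exists an irrational α ∈ (0,1) such that limsup_{m→∞} E(m)/m = λ, where E(m) is the maximal integer exponent n such that some w^n with |w| = m is a factor of a Sturmian word of slope α. -/

import Mathlib

/-- The `n`-th letter of the Sturmian word of slope `α` and intercept `x`:
`s(n) = ⌊(n+1)α + x⌋ − ⌊nα + x⌋`. -/
noncomputable def sturmianLetter (α x : ℝ) (n : ℕ) : ℤ :=
  ⌊((n : ℝ) + 1) * α + x⌋ - ⌊(n : ℝ) * α + x⌋

/-- `u` is a factor of some Sturmian word of slope `α`. -/
def IsSlopeFactor (α : ℝ) (u : List ℤ) : Prop :=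
  ∃ x : ℝ, ∃ i : ℕ, u = (List.range u.length).map (fun j => sturmianLetter α x (i + j))

/-- `E α m` is the maximal integer exponent `n` such that `w^n` is a factor of a
Sturmian word of slope `α` for some word `w` of length `m`. -/
noncomputable def maxPowerExponent (α : ℝ) (m : ℕ) : ℕ :=
  sSup {n : ℕ | ∃ w : List ℤ, w.length = m ∧ IsSlopeFactor α (List.replicate n w).flatten}

namespace CritExp
open List Filter

/-! ### list lemmas -/

lemma length_flatten_replicate (n : ℕ) (w : List ℤ) :
    (List.replicate n w).flatten.length = n * w.length := by
  induction n with
  | zero => simp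
  | succ n ih => rw [List.replicate_succ, List.flatten_cons, List.length_append, ih]; ring

lemma map_range_pointwise {N : ℕ} {f g : ℕ → ℤ}
    (h : (List.range N).map f = (List.range N).map g) : ∀ j < N, f j = g j := by
  intro j hj
  have hj' : j < ((List.range N).map f).length := by simpa using hj
  have hj'' : j < ((List.range N).map g).length := by simpa using hj
  have := List.getElem_of_eq h hj'
  simpa using this

lemma self_eq_map_range_getD (w : List ℤ) :
    w = (List.range w.length).map (fun j => w.getD j 0) := by
  apply List.ext_getElem
  · simp
  · intro i h1 h2
    simp [List.getD_eq_getElem?_getD, List.getElem?_eq_getElem h1]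

lemma flatten_replicate_map_range (g : ℕ → ℤ) (n m : ℕ) :
    (List.replicate n ((List.range m).map g)).flatten
      = (List.range (n*m)).map (fun j => g (j % m)) := by
  induction n with
  | zero => simp
  | succ n ih =>
      have h1 : (n+1)*m = n*m + m := by ring
      have h2 : List.map (fun j => g (j % m)) ((List.range m).map (n*m + ·))
          = List.map g (List.range m) := by
        rw [List.map_map]
        apply List.map_congr_left
        intro a ha
        have ham := List.mem_range.mp ha
        simp [Nat.add_mod, Nat.mul_mod_left, Nat.mod_eq_of_lt ham]
      rw [List.replicate_succ', List.flatten_append, ih, h1, List.range_add,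
        List.map_append, h2]
      simp

lemma periodic_mod {g : ℕ → ℤ} {m N : ℕ} (hm : 1 ≤ m)
    (h : ∀ j, j + m < N → g j = g (j+m)) : ∀ j < N, g (j % m) = g j := by
  intro j
  induction j using Nat.strong_induction_on with
  | _ j ih =>
    intro hj
    rcases lt_or_ge j m with hc | hc
    · rw [Nat.mod_eq_of_lt hc]
    · have h2 : j - m < j := by omega
      have h2' : j - m < N := by omega
      have h4 : (j-m) + m < N := by omega
      rw [Nat.mod_eq_sub_mod hc, ih _ h2 h2', h (j-m) h4]
      congr 1
      omega

/-! ### fract and letter lemmas -/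

lemma fract_add_fract (y s : ℝ) :
    Int.fract (y + s) = Int.fract (Int.fract y + Int.fract s) := by
  have h : y + s = (Int.fract y + Int.fract s) + ((⌊y⌋ + ⌊s⌋ : ℤ) : ℝ) := by
    push_cast; unfold Int.fract; ring
  rw [h, Int.fract_add_intCast]

lemma sturmianLetter_eq (α x : ℝ) (k : ℕ) :
    sturmianLetter α x k = ⌊Int.fract ((k:ℝ)*α + x) + α⌋ := by
  unfold sturmianLetter
  have h : ((k:ℝ)+1)*α + x = ((k:ℝ)*α + x) + α := by ring
  rw [h]
  have h2 : Int.fract ((k:ℝ)*α + x) + α = (((k:ℝ)*α + x) + α) - (⌊(k:ℝ)*α + x⌋ : ℤ) := by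
    unfold Int.fract; push_cast; ring
  rw [h2, Int.floor_sub_intCast]

lemma letter_eq_ite {α : ℝ} (h0 : 0 < α) (h1 : α < 1) (x : ℝ) (k : ℕ) :
    sturmianLetter α x k = if 1 - α ≤ Int.fract ((k:ℝ)*α + x) then 1 else 0 := by
  rw [sturmianLetter_eq]
  have hf0 := Int.fract_nonneg ((k:ℝ)*α + x)
  have hf1 := Int.fract_lt_one ((k:ℝ)*α + x)
  split_ifs with hc
  · apply Int.floor_eq_iff.mpr
    constructor <;> push_cast <;> linarith
  · apply Int.floor_eq_iff.mpr
    constructor <;> push_cast <;> [linarith; linarith [not_le.mp hc]]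

/-! ### the coefficient / convergent recursion -/

noncomputable def coefA (lam : ℝ) (t qnext : ℕ) : ℕ :=
  if t = 0 then max 2 ⌈lam⌉₊ else max 1 ⌈lam * (qnext:ℝ)⌉₊

/-- state `(q t, q (t+1), p t, p (t+1))` -/
noncomputable def st (lam : ℝ) : ℕ → ℕ × ℕ × ℕ × ℕ
  | 0 => (0, 1, 1, 0)
  | t+1 =>
    let s := st lam t
    (s.2.1, coefA lam t s.2.1 * s.2.1 + s.1, s.2.2.2, coefA lam t s.2.1 * s.2.2.2 + s.2.2.1)

noncomputable def qd (lam : ℝ) (t : ℕ) : ℕ := (st lam t).1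
noncomputable def pd (lam : ℝ) (t : ℕ) : ℕ := (st lam t).2.2.1
noncomputable def Ad (lam : ℝ) (t : ℕ) : ℕ := coefA lam t (qd lam (t+1))

variable (lam : ℝ)

lemma st_fst_succ (t : ℕ) : (st lam (t+1)).1 = (st lam t).2.1 := by rw [st]
lemma st_p_succ (t : ℕ) : (st lam (t+1)).2.2.1 = (st lam t).2.2.2 := by rw [st]

lemma qd_succ (t : ℕ) : qd lam (t+1) = (st lam t).2.1 := st_fst_succ lam t
lemma pd_succ (t : ℕ) : pd lam (t+1) = (st lam t).2.2.2 := st_p_succ lam t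

@[simp] lemma qd_zero : qd lam 0 = 0 := rfl
@[simp] lemma qd_one : qd lam 1 = 1 := rfl
@[simp] lemma pd_zero : pd lam 0 = 1 := rfl
@[simp] lemma pd_one : pd lam 1 = 0 := rfl

lemma qd_rec (t : ℕ) : qd lam (t+2) = Ad lam t * qd lam (t+1) + qd lam t := by
  rw [Ad, qd_succ lam t]
  show (st lam (t+1)).2.1 = _
  rw [st]
  show coefA lam t (st lam t).2.1 * (st lam t).2.1 + (st lam t).1 = _
  rfl

lemma pd_rec (t : ℕ) : pd lam (t+2) = Ad lam t * pd lam (t+1) + pd lam t := by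
  rw [Ad, qd_succ lam t, pd_succ lam t]
  show (st lam (t+1)).2.2.2 = _
  rw [st]
  show coefA lam t (st lam t).2.1 * (st lam t).2.2.2 + (st lam t).2.2.1 = _
  rfl

lemma Ad_one_le (t : ℕ) : 1 ≤ Ad lam t := by
  unfold Ad coefA
  split_ifs <;> omega

lemma Ad_zero_two_le : 2 ≤ Ad lam 0 := by
  unfold Ad coefA; simp

lemma qd_two : qd lam 2 = Ad lam 0 := by
  have := qd_rec lam 0; simpa using this

lemma qd_succ_le (t : ℕ) : qd lam (t+1) ≤ qd lam (t+2) := by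
  rw [qd_rec]
  have h := Ad_one_le lam t
  nlinarith [Nat.zero_le (qd lam t)]

lemma qd_pos_succ (t : ℕ) : 1 ≤ qd lam (t+1) := by
  induction t with
  | zero => simp
  | succ n ih => exact le_trans ih (qd_succ_le lam n)

lemma qd_strictMono : StrictMono (qd lam) := by
  apply strictMono_nat_of_lt_succ
  intro t
  match t with
  | 0 => simp
  | 1 =>
    show qd lam 1 < qd lam 2
    rw [qd_two lam, qd_one lam]
    have := Ad_zero_two_le lam
    omega
  | (n+2) =>
    show qd lam (n+2) < qd lam (n+3)
    have h1 := qd_rec lam (n+1)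
    have h2 := Ad_one_le lam (n+1)
    have h3 := qd_pos_succ lam n
    nlinarith

lemma qd_one_le (t : ℕ) : 1 ≤ qd lam (t+1) := by
  have h := (qd_strictMono lam).monotone (Nat.one_le_iff_ne_zero.mpr (Nat.succ_ne_zero t))
  simpa using h

lemma le_qd (t : ℕ) : t ≤ qd lam t := (qd_strictMono lam).le_apply

/-! ### determinant -/

lemma dd_eq (t : ℕ) :
    (pd lam (t+1) : ℤ) * qd lam t - pd lam t * qd lam (t+1) = (-1)^(t+1) := by
  induction t with
  | zero => simp
  | succ n ih =>
    have hq := qd_rec lam n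
    have hp := pd_rec lam n
    have : (pd lam (n+2) : ℤ) * qd lam (n+1) - pd lam (n+1) * qd lam (n+2)
        = -((pd lam (n+1) : ℤ) * qd lam n - pd lam n * qd lam (n+1)) := by
      rw [hq, hp]; push_cast; ring
    rw [this, ih]; ring


/-! ### convergents and alpha -/

noncomputable def cv (lam : ℝ) (t : ℕ) : ℝ := (pd lam t : ℝ) / (qd lam t : ℝ)

lemma qd_cast_pos (t : ℕ) : (0:ℝ) < qd lam (t+1) := by
  exact_mod_cast qd_pos_succ lam t

lemma cv_diff (t : ℕ) : cv lam (t+2) - cv lam (t+1)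
    = (-1)^t / ((qd lam (t+1) : ℝ) * qd lam (t+2)) := by
  have h1 := qd_cast_pos lam t
  have h2 := qd_cast_pos lam (t+1)
  have hd := dd_eq lam (t+1)
  have hd' : (pd lam (t+2) : ℝ) * qd lam (t+1) - pd lam (t+1) * qd lam (t+2) = (-1)^(t+2) := by
    exact_mod_cast congrArg (fun z : ℤ => (z:ℝ)) hd
  have hpow : (-1:ℝ)^(t+2) = (-1)^t := by rw [pow_succ, pow_succ]; ring
  have key : cv lam (t+2) - cv lam (t+1)
      = ((pd lam (t+2):ℝ) * qd lam (t+1) - pd lam (t+1) * qd lam (t+2))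
        / ((qd lam (t+1):ℝ) * qd lam (t+2)) := by
    unfold cv; field_simp
  rw [key, hd', hpow]

lemma cv_odd_lt_succ (s : ℕ) : cv lam (2*s+1) < cv lam (2*s+2) := by
  have h := cv_diff lam (2*s)
  have hp : ((-1:ℝ))^(2*s) = 1 := by
    rw [pow_mul]; norm_num
  have h1 := qd_cast_pos lam (2*s)
  have h2 := qd_cast_pos lam (2*s+1)
  rw [hp] at h
  have : (0:ℝ) < 1 / ((qd lam (2*s+1) : ℝ) * qd lam (2*s+2)) := by positivity
  linarith

lemma cv_odd_mono (s : ℕ) : cv lam (2*s+1) < cv lam (2*s+3) := by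
  have h1 := cv_diff lam (2*s)
  have h2 := cv_diff lam (2*s+1)
  have hp1 : ((-1:ℝ))^(2*s) = 1 := by rw [pow_mul]; norm_num
  have hp2 : ((-1:ℝ))^(2*s+1) = -1 := by rw [pow_succ, pow_mul]; norm_num
  rw [hp1] at h1; rw [hp2] at h2
  have q1 := qd_cast_pos lam (2*s)
  have q2 := qd_cast_pos lam (2*s+1)
  have q3 := qd_cast_pos lam (2*s+2)
  have hlt : (qd lam (2*s+1) : ℝ) < qd lam (2*s+3) := by
    exact_mod_cast qd_strictMono lam (by omega : 2*s+1 < 2*s+3)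
  have key : 1 / ((qd lam (2*s+2) : ℝ) * qd lam (2*s+3))
      < 1 / ((qd lam (2*s+1) : ℝ) * qd lam (2*s+2)) := by
    apply one_div_lt_one_div_of_lt
    · positivity
    · nlinarith
  have h2' : cv lam (2*s+3) - cv lam (2*s+2)
      = -(1 / ((qd lam (2*s+2) : ℝ) * qd lam (2*s+3))) := by
    rw [h2]; ring
  linarith

lemma cv_even_anti (s : ℕ) : cv lam (2*s+4) < cv lam (2*s+2) := by
  have h1 := cv_diff lam (2*s+1)
  have h2 := cv_diff lam (2*s+2)
  have e1 : 2*s+1+1 = 2*s+2 := by ring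
  have e2 : 2*s+1+2 = 2*s+3 := by ring
  have e3 : 2*s+2+1 = 2*s+3 := by ring
  have e4 : 2*s+2+2 = 2*s+4 := by ring
  rw [e1, e2] at h1
  rw [e3, e4] at h2
  have hp1 : ((-1:ℝ))^(2*s+1) = -1 := by rw [pow_succ, pow_mul]; norm_num
  have hp2 : ((-1:ℝ))^(2*s+2) = 1 := by rw [pow_succ, pow_succ, pow_mul]; norm_num
  rw [hp1] at h1; rw [hp2] at h2
  have q1 := qd_cast_pos lam (2*s+1)
  have q2 := qd_cast_pos lam (2*s+2)
  have q3 := qd_cast_pos lam (2*s+3)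
  have hlt : (qd lam (2*s+2) : ℝ) < qd lam (2*s+4) := by
    exact_mod_cast qd_strictMono lam (by omega : 2*s+2 < 2*s+4)
  have key : 1 / ((qd lam (2*s+3) : ℝ) * qd lam (2*s+4))
      < 1 / ((qd lam (2*s+2) : ℝ) * qd lam (2*s+3)) := by
    apply one_div_lt_one_div_of_lt
    · positivity
    · nlinarith
  have h1x : cv lam (2*s+3) - cv lam (2*s+2)
      = -(1 / ((qd lam (2*s+2) : ℝ) * qd lam (2*s+3))) := by
    rw [h1]; ring
  linarith

lemma cv_odd_mono' : Monotone (fun s => cv lam (2*s+1)) := by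
  apply monotone_nat_of_le_succ
  intro s
  have := cv_odd_mono lam s
  have he : 2*(s+1)+1 = 2*s+3 := by ring
  rw [he]
  linarith

lemma cv_even_anti' : Antitone (fun s => cv lam (2*s+2)) := by
  apply antitone_nat_of_succ_le
  intro s
  have := cv_even_anti lam s
  have he : 2*(s+1)+2 = 2*s+4 := by ring
  rw [he]
  linarith

lemma cv_odd_lt_even (u v : ℕ) : cv lam (2*u+1) < cv lam (2*v+2) := by
  have h1 : cv lam (2*u+1) ≤ cv lam (2*(max u v)+1) := cv_odd_mono' lam (le_max_left u v)
  have h2 : cv lam (2*(max u v)+2) ≤ cv lam (2*v+2) := cv_even_anti' lam (le_max_right u v)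
  have h3 := cv_odd_lt_succ lam (max u v)
  linarith

noncomputable def alp (lam : ℝ) : ℝ := ⨆ s : ℕ, cv lam (2*s+1)

lemma alp_bddAbove : BddAbove (Set.range fun s => cv lam (2*s+1)) := by
  refine ⟨cv lam 2, ?_⟩
  rintro x ⟨u, rfl⟩
  have := cv_odd_lt_even lam u 0
  simpa using this.le

lemma cv_odd_le_alp (s : ℕ) : cv lam (2*s+1) ≤ alp lam :=
  le_ciSup (alp_bddAbove lam) s

lemma alp_le_cv_even (v : ℕ) : alp lam ≤ cv lam (2*v+2) :=
  ciSup_le (fun u => (cv_odd_lt_even lam u v).le)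

lemma cv_odd_lt_alp (s : ℕ) : cv lam (2*s+1) < alp lam := by
  have h1 := cv_odd_mono lam s
  have h2 := cv_odd_le_alp lam (s+1)
  have he : 2*(s+1)+1 = 2*s+3 := by ring
  rw [he] at h2
  linarith

lemma alp_lt_cv_even (v : ℕ) : alp lam < cv lam (2*v+2) := by
  have h1 := cv_even_anti lam v
  have h2 := alp_le_cv_even lam (v+1)
  have he : 2*(v+1)+2 = 2*v+4 := by ring
  rw [he] at h2
  linarith

/-! ### theta -/

noncomputable def θd (lam : ℝ) (t : ℕ) : ℝ :=
  (-1:ℝ)^(t+1) * ((qd lam t : ℝ) * alp lam - (pd lam t : ℝ))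

lemma θd_zero : θd lam 0 = 1 := by simp [θd]

lemma θd_one : θd lam 1 = alp lam := by simp [θd]

lemma θd_pos (t : ℕ) : 0 < θd lam t := by
  match t with
  | 0 => rw [θd_zero]; norm_num
  | (t'+1) =>
    rcases Nat.even_or_odd t' with ⟨s, hs⟩ | ⟨s, hs⟩
    · -- t = 2s+1, odd
      have ht : t' + 1 = 2*s+1 := by omega
      rw [ht]
      have h := cv_odd_lt_alp lam s
      have hq := qd_cast_pos lam (2*s)
      unfold cv at h
      rw [div_lt_iff₀ hq] at h
      unfold θd
      have hp : ((-1:ℝ))^(2*s+1+1) = 1 := by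
        rw [pow_succ, pow_succ, pow_mul]; norm_num
      rw [hp]
      nlinarith
    · -- t = 2s+2, even
      have ht : t' + 1 = 2*s+2 := by omega
      rw [ht]
      have h := alp_lt_cv_even lam s
      have hq := qd_cast_pos lam (2*s+1)
      unfold cv at h
      rw [lt_div_iff₀ hq] at h
      unfold θd
      have hp : ((-1:ℝ))^(2*s+2+1) = -1 := by
        rw [pow_succ, pow_succ, pow_succ, pow_mul]; norm_num
      rw [hp]
      nlinarith

lemma θd_rec (t : ℕ) : θd lam (t+2) = θd lam t - (Ad lam t : ℝ) * θd lam (t+1) := by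
  have hq : (qd lam (t+2) : ℝ) = (Ad lam t : ℝ) * qd lam (t+1) + qd lam t := by
    exact_mod_cast congrArg (fun n : ℕ => (n:ℝ)) (qd_rec lam t)
  have hp : (pd lam (t+2) : ℝ) = (Ad lam t : ℝ) * pd lam (t+1) + pd lam t := by
    exact_mod_cast congrArg (fun n : ℕ => (n:ℝ)) (pd_rec lam t)
  unfold θd
  rw [hq, hp, pow_succ, pow_succ]
  ring

lemma θd_iden (t : ℕ) :
    (qd lam (t+1) : ℝ) * θd lam t + (qd lam t : ℝ) * θd lam (t+1) = 1 := by
  have hd := dd_eq lam t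
  have hd' : (pd lam (t+1) : ℝ) * qd lam t - (pd lam t:ℝ) * qd lam (t+1) = (-1)^(t+1) := by
    exact_mod_cast congrArg (fun z : ℤ => (z:ℝ)) hd
  have hsq : (-1:ℝ)^(t+1) * (-1:ℝ)^(t+1) = 1 := by
    rw [← pow_add]
    have : Even (t+1+(t+1)) := ⟨t+1, rfl⟩
    exact this.neg_one_pow
  unfold θd
  rw [pow_succ]
  linear_combination ((-1:ℝ)^(t+1)) * hd' + hsq

lemma θd_succ_lt (t : ℕ) : θd lam (t+1) < θd lam t := by
  have h1 := θd_rec lam t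
  have h2 := θd_pos lam (t+1)
  have h3 := θd_pos lam (t+2)
  have h4 : (1:ℝ) ≤ (Ad lam t : ℝ) := by exact_mod_cast Ad_one_le lam t
  nlinarith

lemma θd_anti : Antitone (θd lam) :=
  antitone_nat_of_succ_le (fun t => (θd_succ_lt lam t).le)

lemma θd_mul_le_one (t : ℕ) : (qd lam (t+1) : ℝ) * θd lam t ≤ 1 := by
  have h := θd_iden lam t
  have h2 := θd_pos lam (t+1)
  have h3 : (0:ℝ) ≤ qd lam t := by positivity
  nlinarith

/-! ### alpha basic bounds -/

lemma pd_two : pd lam 2 = 1 := by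
  have := pd_rec lam 0; simpa using this

lemma alp_pos : 0 < alp lam := by
  have h := cv_odd_lt_alp lam 0
  have : cv lam 1 = 0 := by unfold cv; simp
  simpa [this] using h

lemma alp_lt_half : alp lam < 1/2 := by
  have h := alp_lt_cv_even lam 0
  have h2 : cv lam 2 ≤ 1/2 := by
    unfold cv
    rw [pd_two, qd_two]
    have : (2:ℝ) ≤ (Ad lam 0 : ℝ) := by exact_mod_cast Ad_zero_two_le lam
    rw [div_le_div_iff₀ (by linarith) (by norm_num)]
    push_cast
    linarith
  simpa using lt_of_lt_of_le h h2

lemma alp_lt_one : alp lam < 1 := by have := alp_lt_half lam; linarith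

lemma pd_three : pd lam 3 = Ad lam 1 := by
  have := pd_rec lam 1; simpa [pd_two] using this

lemma qd_three : qd lam 3 = Ad lam 1 * Ad lam 0 + 1 := by
  have := qd_rec lam 1; simpa [qd_two] using this

lemma alp_gt_inv : 1 / ((Ad lam 0 : ℝ) + 1) < alp lam := by
  have h := cv_odd_lt_alp lam 1
  have h3 : cv lam 3 = (Ad lam 1 : ℝ) / ((Ad lam 1 : ℝ) * Ad lam 0 + 1) := by
    unfold cv; rw [pd_three, qd_three]; push_cast; ring_nf
  have hA1 : (1:ℝ) ≤ Ad lam 1 := by exact_mod_cast Ad_one_le lam 1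
  have hA0 : (2:ℝ) ≤ Ad lam 0 := by exact_mod_cast Ad_zero_two_le lam
  have key : 1 / ((Ad lam 0 : ℝ) + 1) ≤ cv lam 3 := by
    rw [h3, div_le_div_iff₀ (by linarith) (by nlinarith)]
    nlinarith
  have : (2*1+1 : ℕ) = 3 := by norm_num
  rw [this] at h
  linarith

lemma abs_eq_θd (t : ℕ) : |(qd lam t : ℝ) * alp lam - pd lam t| = θd lam t := by
  have h2 : θd lam t = (-1:ℝ)^(t+1) * ((qd lam t : ℝ) * alp lam - pd lam t) := rfl
  rcases Nat.even_or_odd (t+1) with he | ho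
  · rw [he.neg_one_pow, one_mul] at h2
    rw [← h2, abs_of_pos (θd_pos lam t)]
  · rw [ho.neg_one_pow] at h2
    have h3 : (qd lam t : ℝ) * alp lam - pd lam t = -θd lam t := by rw [h2]; ring
    rw [h3, abs_neg, abs_of_pos (θd_pos lam t)]

lemma alp_irrational : Irrational (alp lam) := by
  rw [irrational_iff_ne_rational]
  intro a b _ heq
  have hb0 : b ≠ 0 := by
    intro h
    rw [h] at heq
    simp at heq
    exact absurd heq (ne_of_gt (alp_pos lam))
  have hbR : ((b:ℝ)) ≠ 0 := Int.cast_ne_zero.mpr hb0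
  set T := b.natAbs + 1 with hT
  have hbT : |(b:ℝ)| < qd lam (T+1) := by
    have h1 : b.natAbs + 2 ≤ qd lam (T+1) := by
      have := le_qd lam (T+1); omega
    have h2 : |(b:ℝ)| = (b.natAbs : ℝ) := by
      rw [Nat.cast_natAbs]
      exact (Int.cast_abs).symm
    rw [h2]
    exact_mod_cast by omega
  set N : ℤ := qd lam T * a - pd lam T * b with hN
  have h1 : (N:ℝ) = b * ((qd lam T : ℝ) * alp lam - pd lam T) := by
    rw [hN]; push_cast; rw [heq]; field_simp
  have key : |(N:ℝ)| = |(b:ℝ)| * θd lam T := by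
    rw [h1, abs_mul, abs_eq_θd]
  have hθ := θd_pos lam T
  have hlt : |(N:ℝ)| < 1 := by
    rw [key]
    have h3 : |(b:ℝ)| * θd lam T < (qd lam (T+1):ℝ) * θd lam T :=
      mul_lt_mul_of_pos_right hbT hθ
    have h4 := θd_mul_le_one lam T
    linarith
  have hN0 : N = 0 := by
    have h6 : |N| < 1 := by exact_mod_cast hlt
    have h7 := abs_lt.mp h6
    omega
  rw [hN0] at key
  have h8 : (0:ℝ) = |(b:ℝ)| * θd lam T := by simpa using key
  nlinarith [abs_pos.mpr hbR, hθ]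

/-! ### best approximation -/

lemma best_approx (t : ℕ) (ht : 1 ≤ t) (r : ℕ) (hr1 : 1 ≤ r)
    (hr2 : r < qd lam (t+1)) (s : ℤ) :
    θd lam t ≤ |(r:ℝ) * alp lam - (s:ℝ)| := by
  obtain ⟨t', rfl⟩ : ∃ t', t = t'+1 := ⟨t-1, by omega⟩
  set t := t'+1 with hteq
  set e : ℤ := (-1)^(t+1) with he
  have hee : e * e = 1 := by
    rw [he, ← pow_add]
    exact Even.neg_one_pow ⟨t+1, rfl⟩
  have hd : (pd lam (t+1) : ℤ) * qd lam t - pd lam t * qd lam (t+1) = e := dd_eq lam t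
  set u : ℤ := e * ((r:ℤ) * pd lam (t+1) - s * qd lam (t+1)) with hu
  set v : ℤ := e * (s * qd lam t - (r:ℤ) * pd lam t) with hv
  have huv1 : u * qd lam t + v * qd lam (t+1) = (r:ℤ) := by
    rw [hu, hv]
    linear_combination e * (r:ℤ) * hd + (r:ℤ) * hee
  have huv2 : u * pd lam t + v * pd lam (t+1) = s := by
    rw [hu, hv]
    linear_combination e * s * hd + s * hee
  have h1R : (u:ℝ) * qd lam t + (v:ℝ) * qd lam (t+1) = (r:ℝ) := by exact_mod_cast huv1
  have h2R : (u:ℝ) * pd lam t + (v:ℝ) * pd lam (t+1) = (s:ℝ) := by exact_mod_cast huv2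
  have heR : ((e:ℝ)) = (-1:ℝ)^(t+1) := by rw [he]; push_cast; ring
  have heeR : (e:ℝ) * (e:ℝ) = 1 := by exact_mod_cast hee
  have hX : (qd lam t : ℝ) * alp lam - pd lam t = (e:ℝ) * θd lam t := by
    unfold θd
    rw [← heR]
    linear_combination (-((qd lam t : ℝ) * alp lam - pd lam t)) * heeR
  have hX' : (qd lam (t+1) : ℝ) * alp lam - pd lam (t+1) = -((e:ℝ) * θd lam (t+1)) := by
    unfold θd
    have hp : (-1:ℝ)^(t+1+1) = -((-1:ℝ)^(t+1)) := by rw [pow_succ]; ring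
    rw [hp, ← heR]
    linear_combination (-((qd lam (t+1) : ℝ) * alp lam - pd lam (t+1))) * heeR
  have hral : (r:ℝ) * alp lam - s
      = (e:ℝ) * ((u:ℝ) * θd lam t - (v:ℝ) * θd lam (t+1)) := by
    have expand : (r:ℝ) * alp lam - s
        = (u:ℝ) * ((qd lam t : ℝ) * alp lam - pd lam t)
          + (v:ℝ) * ((qd lam (t+1) : ℝ) * alp lam - pd lam (t+1)) := by
      linear_combination (-(alp lam)) * h1R + h2R
    rw [expand, hX, hX']
    ring
  have habs : |(r:ℝ) * alp lam - s| = |(u:ℝ) * θd lam t - (v:ℝ) * θd lam (t+1)| := by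
    rw [hral, abs_mul, heR]
    simp
  rw [habs]
  have hqt : (1:ℤ) ≤ qd lam t := by exact_mod_cast qd_pos_succ lam t'
  have hqt1 : (1:ℤ) ≤ qd lam (t+1) := by exact_mod_cast qd_pos_succ lam t
  have hrZ : (1:ℤ) ≤ (r:ℤ) := by exact_mod_cast hr1
  have hrZ2 : (r:ℤ) < qd lam (t+1) := by exact_mod_cast hr2
  have hθt := θd_pos lam t
  have hθt1 := θd_pos lam (t+1)
  set X := (u:ℝ) * θd lam t - (v:ℝ) * θd lam (t+1) with hXdef
  rcases lt_trichotomy v 0 with hvneg | hv0 | hvpos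
  · have h11 : 1 ≤ u := by
      by_contra hcon
      push_neg at hcon
      have h12 : u * qd lam t ≤ 0 :=
        mul_nonpos_iff.mpr (Or.inr ⟨by omega, by omega⟩)
      have h13 : (v+1) * qd lam (t+1) ≤ 0 :=
        mul_nonpos_iff.mpr (Or.inr ⟨by omega, by omega⟩)
      have h14 : v * qd lam (t+1) ≤ -qd lam (t+1) := by linarith [h13]
      linarith [huv1, h12, h14, hrZ, hqt1]
    have huR : (1:ℝ) ≤ (u:ℝ) := by exact_mod_cast h11
    have hvR : (v:ℝ) ≤ -1 := by exact_mod_cast (by omega : v ≤ -1)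
    have hXpos : θd lam t ≤ X := by
      have p1 : (0:ℝ) ≤ ((u:ℝ) - 1) * θd lam t := mul_nonneg (by linarith) hθt.le
      have p2 : (0:ℝ) ≤ (-(v:ℝ) - 1) * θd lam (t+1) := mul_nonneg (by linarith) hθt1.le
      rw [hXdef]; nlinarith
    exact hXpos.trans (le_abs_self X)
  · have h11 : 1 ≤ u := by
      by_contra hcon
      push_neg at hcon
      have h12 : u * qd lam t ≤ 0 :=
        mul_nonpos_iff.mpr (Or.inr ⟨by omega, by omega⟩)
      rw [hv0] at huv1
      simp at huv1
      omega
    have huR : (1:ℝ) ≤ (u:ℝ) := by exact_mod_cast h11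
    have hXpos : θd lam t ≤ X := by
      have p1 : (0:ℝ) ≤ ((u:ℝ) - 1) * θd lam t := mul_nonneg (by linarith) hθt.le
      have hv0R : ((v:ℝ)) = 0 := by exact_mod_cast congrArg (fun z : ℤ => (z:ℝ)) hv0
      rw [hXdef, hv0R]; nlinarith
    exact hXpos.trans (le_abs_self X)
  · have h11 : u ≤ -1 := by
      by_contra hcon
      push_neg at hcon
      have hu0 : 0 ≤ u := by omega
      have h12 : 0 ≤ u * qd lam t := mul_nonneg hu0 (by omega)
      have h13 : 0 ≤ (v-1) * qd lam (t+1) :=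
        mul_nonneg (by omega) (by omega)
      have h14 : qd lam (t+1) ≤ v * qd lam (t+1) := by linarith [h13]
      linarith [huv1, h12, h14, hrZ2]
    have huR : (u:ℝ) ≤ -1 := by exact_mod_cast h11
    have hvR : (1:ℝ) ≤ (v:ℝ) := by exact_mod_cast hvpos
    have hXneg : θd lam t ≤ -X := by
      have p1 : (0:ℝ) ≤ (-(u:ℝ) - 1) * θd lam t := mul_nonneg (by linarith) hθt.le
      have p2 : (0:ℝ) ≤ (v:ℝ) * θd lam (t+1) := mul_nonneg (by linarith) hθt1.le
      rw [hXdef]; nlinarith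
    exact hXneg.trans (neg_le_abs X)

/-! ### gap lemma -/

noncomputable def Bd (lam : ℝ) (t : ℕ) : ℕ :=
  qd lam (t+1) + 4 * qd lam t + 3 * qd lam (t-1)

lemma eps_eq (t : ℕ) :
    (qd lam t : ℝ) * alp lam - pd lam t = (-1:ℝ)^(t+1) * θd lam t := by
  unfold θd
  rw [← mul_assoc, ← pow_add]
  have he : Even (t+1+(t+1)) := ⟨t+1, rfl⟩
  rw [he.neg_one_pow, one_mul]

lemma march_helper (θ1 θ2 θ3 : ℝ) (a : ℕ) (h1 : θ3 = θ1 - a*θ2)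
    (h2 : 0 < θ3) (h3 : θ3 ≤ θ2) (h4 : 0 < θ2) (d : ℝ)
    (hd1 : -θ1 < d) (hd2 : d ≤ 0) :
    (∃ v : ℕ, v ≤ a ∧ -θ2 < d + v*θ2 ∧ d + v*θ2 ≤ 0) ∧
    (∃ v : ℕ, v ≤ a+1 ∧ 0 ≤ d + v*θ2 ∧ d + v*θ2 < θ2) := by
  have hθ1 : 0 < θ1 := by nlinarith [Nat.cast_nonneg (α := ℝ) a]
  set v0 := ⌊(-d)/θ2⌋₊ with hv0
  have hnn : 0 ≤ (-d)/θ2 := div_nonneg (by linarith) h4.le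
  have hfl : (v0:ℝ) ≤ (-d)/θ2 := Nat.floor_le hnn
  have hfu : (-d)/θ2 < v0 + 1 := Nat.lt_floor_add_one _
  have hl : (v0:ℝ) * θ2 ≤ -d := (le_div_iff₀ h4).mp hfl
  have hu : -d < ((v0:ℝ)+1) * θ2 := (div_lt_iff₀ h4).mp hfu
  have hva : v0 ≤ a := by
    have h5 : (-d)/θ2 < (a:ℝ) + 1 := by
      rw [div_lt_iff₀ h4]
      nlinarith
    have h6 : (v0:ℝ) < (a:ℝ) + 1 := lt_of_le_of_lt hfl h5
    exact_mod_cast Nat.lt_succ_iff.mp (by exact_mod_cast h6)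
  constructor
  · exact ⟨v0, hva, by linarith, by linarith⟩
  · rcases eq_or_lt_of_le (show d + (v0:ℝ)*θ2 ≤ 0 by linarith) with heq | hlt
    · exact ⟨v0, by omega, by linarith, by linarith⟩
    · refine ⟨v0 + 1, by omega, ?_, ?_⟩ <;> push_cast <;> nlinarith

lemma budget (t : ℕ) (ht : 1 ≤ t) (j' v : ℕ) (hj : j' < Bd lam t)
    (hv : v ≤ Ad lam t + 1) :
    j' + v * qd lam (t+1) < Bd lam (t+1) := by
  have hrec := qd_rec lam t
  have hvq : v * qd lam (t+1) ≤ (Ad lam t + 1) * qd lam (t+1) :=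
    Nat.mul_le_mul_right _ hv
  have hq2 : qd lam t + qd lam (t-1) ≤ qd lam (t+1) := by
    obtain ⟨u, rfl⟩ : ∃ u, t = u+1 := ⟨t-1, by omega⟩
    have h7 := qd_rec lam u
    have hA := Ad_one_le lam u
    have h8 : qd lam (u+1) + qd lam u ≤ qd lam (u+2) := by nlinarith
    simpa using h8
  have hmono : qd lam (t-1) ≤ qd lam t := (qd_strictMono lam).monotone (by omega)
  have expand : (Ad lam t + 1) * qd lam (t+1) = Ad lam t * qd lam (t+1) + qd lam (t+1) := by
    ring
  rw [expand] at hvq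
  have hB1 : Bd lam t = qd lam (t+1) + 4 * qd lam t + 3 * qd lam (t-1) := rfl
  have hB2 : Bd lam (t+1) = qd lam (t+2) + 4 * qd lam (t+1) + 3 * qd lam t := by
    unfold Bd; simp
  rw [hB1] at hj
  rw [hB2]
  set X1 := Ad lam t * qd lam (t+1) with hX1
  set X2 := v * qd lam (t+1) with hX2
  omega

lemma gap_lemma : ∀ t, 1 ≤ t → ∀ z : ℝ,
    (∃ j : ℕ, ∃ k : ℤ, j < Bd lam t ∧
      0 ≤ z + (j:ℝ) * alp lam - (k:ℝ) ∧ z + (j:ℝ) * alp lam - (k:ℝ) < θd lam t) ∧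
    (∃ j : ℕ, ∃ k : ℤ, j < Bd lam t ∧
      -(θd lam t) < z + (j:ℝ) * alp lam - (k:ℝ) ∧ z + (j:ℝ) * alp lam - (k:ℝ) ≤ 0) := by
  intro t ht
  induction t, ht using Nat.le_induction with
  | base =>
    intro z
    have hα := alp_pos lam
    have hB1 : Bd lam 1 = qd lam 2 + 4 := by unfold Bd; simp
    have hθ1 : θd lam 1 = alp lam := θd_one lam
    set w := Int.fract z with hw
    have hw0 : 0 ≤ w := Int.fract_nonneg z
    have hw1 : w < 1 := Int.fract_lt_one z
    set j0 := ⌊(1-w)/alp lam⌋₊ with hj0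
    have hnn : 0 ≤ (1-w)/alp lam := div_nonneg (by linarith) hα.le
    have hfl : (j0:ℝ) ≤ (1-w)/alp lam := Nat.floor_le hnn
    have hfu : (1-w)/alp lam < j0 + 1 := Nat.lt_floor_add_one _
    have hl : (j0:ℝ) * alp lam ≤ 1 - w := (le_div_iff₀ hα).mp hfl
    have hu : 1 - w < ((j0:ℝ)+1) * alp lam := (div_lt_iff₀ hα).mp hfu
    have hgt : 1 < alp lam * ((qd lam 2:ℝ)+1) := by
      have h9 := alp_gt_inv lam
      have h10 : (qd lam 2 : ℝ) = (Ad lam 0 : ℝ) := by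
        exact_mod_cast congrArg (fun n : ℕ => (n:ℝ)) (qd_two lam)
      rw [h10]
      have h11 : (0:ℝ) < (Ad lam 0:ℝ) + 1 := by positivity
      rw [div_lt_iff₀ h11] at h9
      nlinarith
    have hje : (j0:ℝ) < (qd lam 2:ℝ) + 1 := by
      have h12 : (1-w)/alp lam ≤ 1/alp lam := by gcongr; linarith
      have h13 : 1/alp lam < (qd lam 2:ℝ) + 1 := by
        rw [div_lt_iff₀ hα]; nlinarith
      linarith
    have hjn : j0 < qd lam 2 + 1 := by
      by_contra hcon
      push_neg at hcon
      have h15 : ((qd lam 2 + 1 : ℕ):ℝ) ≤ (j0:ℝ) := by exact_mod_cast hcon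
      push_cast at h15
      linarith
    have hval : ∀ j : ℕ, z + (j:ℝ) * alp lam - ((⌊z⌋ + 1 : ℤ):ℝ)
        = w + (j:ℝ) * alp lam - 1 := by
      intro j
      rw [hw, Int.fract]
      push_cast
      ring
    rw [hθ1]
    constructor
    · rcases eq_or_lt_of_le (show w + (j0:ℝ)*alp lam - 1 ≤ 0 by linarith) with heq | hlt
      · refine ⟨j0, ⌊z⌋ + 1, by omega, ?_, ?_⟩ <;> rw [hval j0] <;> linarith
      · refine ⟨j0 + 1, ⌊z⌋ + 1, by omega, ?_, ?_⟩ <;> rw [hval (j0+1)] <;>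
          push_cast <;> nlinarith
    · refine ⟨j0, ⌊z⌋ + 1, by omega, ?_, ?_⟩ <;> rw [hval j0] <;> linarith
  | succ t ht IH =>
    intro z
    have hrec : θd lam (t+2) = θd lam t - (Ad lam t : ℝ) * θd lam (t+1) := θd_rec lam t
    have hp2 := θd_pos lam (t+2)
    have hp1 := θd_pos lam (t+1)
    have hle : θd lam (t+2) ≤ θd lam (t+1) := (θd_succ_lt lam (t+1)).le
    rcases Nat.even_or_odd t with heev | hodd
    · -- Even t : epsilon(t+1) = +θ(t+1)
      have hev2 : Even (t+2) := by rcases heev with ⟨s, hs⟩; exact ⟨s+1, by omega⟩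
      have heps : (qd lam (t+1) : ℝ) * alp lam - pd lam (t+1) = θd lam (t+1) := by
        have h14 := eps_eq lam (t+1)
        rw [show t+1+1 = t+2 from rfl, hev2.neg_one_pow, one_mul] at h14
        exact h14
      obtain ⟨_, ⟨j', k', hj', hn1, hn2⟩⟩ := IH z
      have hmarch := march_helper (θd lam t) (θd lam (t+1)) (θd lam (t+2)) (Ad lam t)
        hrec hp2 hle hp1 (z + (j':ℝ) * alp lam - k') hn1 hn2
      obtain ⟨⟨v1, hv1, hv1a, hv1b⟩, ⟨v2, hv2, hv2a, hv2b⟩⟩ := hmarch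
      have hval : ∀ v : ℕ, z + ((j' + v * qd lam (t+1) : ℕ):ℝ) * alp lam
          - ((k' + v * pd lam (t+1) : ℤ):ℝ)
          = (z + (j':ℝ) * alp lam - k') + (v:ℝ) * θd lam (t+1) := by
        intro v
        push_cast
        linear_combination (v:ℝ) * heps
      constructor
      · exact ⟨j' + v2 * qd lam (t+1), k' + v2 * pd lam (t+1),
          budget lam t ht j' v2 hj' hv2, by rw [hval v2]; linarith, by rw [hval v2]; linarith⟩
      · exact ⟨j' + v1 * qd lam (t+1), k' + v1 * pd lam (t+1),
          budget lam t ht j' v1 hj' (by omega), by rw [hval v1]; linarith, by rw [hval v1]; linarith⟩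
    · -- Odd t : epsilon(t+1) = -θ(t+1)
      have hod2 : Odd (t+2) := by rcases hodd with ⟨s, hs⟩; exact ⟨s+1, by omega⟩
      have heps : (qd lam (t+1) : ℝ) * alp lam - pd lam (t+1) = -θd lam (t+1) := by
        have h14 := eps_eq lam (t+1)
        rw [show t+1+1 = t+2 from rfl, hod2.neg_one_pow] at h14
        rw [h14]; ring
      obtain ⟨⟨j', k', hj', hn1, hn2⟩, _⟩ := IH z
      have hmarch := march_helper (θd lam t) (θd lam (t+1)) (θd lam (t+2)) (Ad lam t)
        hrec hp2 hle hp1 (-(z + (j':ℝ) * alp lam - k')) (by linarith) (by linarith)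
      obtain ⟨⟨v1, hv1, hv1a, hv1b⟩, ⟨v2, hv2, hv2a, hv2b⟩⟩ := hmarch
      have hval : ∀ v : ℕ, z + ((j' + v * qd lam (t+1) : ℕ):ℝ) * alp lam
          - ((k' + v * pd lam (t+1) : ℤ):ℝ)
          = (z + (j':ℝ) * alp lam - k') - (v:ℝ) * θd lam (t+1) := by
        intro v
        push_cast
        linear_combination (v:ℝ) * heps
      constructor
      · exact ⟨j' + v1 * qd lam (t+1), k' + v1 * pd lam (t+1),
          budget lam t ht j' v1 hj' (by omega), by rw [hval v1]; linarith, by rw [hval v1]; linarith⟩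
      · exact ⟨j' + v2 * qd lam (t+1), k' + v2 * pd lam (t+1),
          budget lam t ht j' v2 hj' hv2, by rw [hval v2]; linarith, by rw [hval v2]; linarith⟩

lemma gap_Ico (t : ℕ) (ht : 1 ≤ t) (z : ℝ) :
    ∃ j : ℕ, ∃ k : ℤ, j < Bd lam t ∧
      0 ≤ z + (j:ℝ) * alp lam - (k:ℝ) ∧ z + (j:ℝ) * alp lam - (k:ℝ) < θd lam t :=
  (gap_lemma lam t ht z).1

/-! ### the factor set -/

def Sset (α : ℝ) (m : ℕ) : Set ℕ :=
  {n : ℕ | ∃ w : List ℤ, w.length = m ∧ IsSlopeFactor α (List.replicate n w).flatten}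

lemma maxPowerExponent_eq (α : ℝ) (m : ℕ) : maxPowerExponent α m = sSup (Sset α m) := rfl

lemma zero_mem_Sset (α : ℝ) (m : ℕ) : 0 ∈ Sset α m := by
  refine ⟨List.replicate m 0, by simp, 0, 0, ?_⟩
  simp

lemma factor_pointwise {α : ℝ} {m n : ℕ} {w : List ℤ} (hw : w.length = m)
    (hf : IsSlopeFactor α (List.replicate n w).flatten) :
    ∃ x : ℝ, ∃ i : ℕ, ∀ j, j + m < n*m →
      sturmianLetter α x (i+j) = sturmianLetter α x (i+j+m) := by
  obtain ⟨x, i, heq⟩ := hf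
  refine ⟨x, i, ?_⟩
  have hlen : (List.replicate n w).flatten.length = n*m := by
    rw [length_flatten_replicate, hw]
  set g : ℕ → ℤ := fun j => w.getD j 0 with hg
  have hwg : w = (List.range m).map g := by
    conv_lhs => rw [self_eq_map_range_getD w]
    rw [hw]
  have h1 : (List.replicate n w).flatten
      = (List.range (n*m)).map (fun j => g (j % m)) := by
    conv_lhs => rw [hwg]
    exact flatten_replicate_map_range g n m
  have h2 : (List.range (n*m)).map (fun j => g (j % m))
      = (List.range (n*m)).map (fun j => sturmianLetter α x (i+j)) := by
    rw [← h1]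
    rw [hlen] at heq
    exact heq
  have h3 := map_range_pointwise h2
  intro j hj
  have e1 : g (j % m) = sturmianLetter α x (i+j) := h3 j (by omega)
  have e2 : g ((j+m) % m) = sturmianLetter α x (i+(j+m)) := h3 (j+m) hj
  rw [Nat.add_mod_right] at e2
  have e4 : i + (j+m) = i + j + m := by omega
  rw [e4] at e2
  rw [← e1, ← e2]

/-! ### upper bound -/

lemma upper_main (t m n : ℕ) (ht : 1 ≤ t) (hm : 1 ≤ m) (hmq : m < qd lam (t+1))
    (hn : 2 ≤ n) (hS : n ∈ Sset (alp lam) m) : (n-1)*m < Bd lam t := by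
  have hα0 := alp_pos lam
  have hα2 := alp_lt_half lam
  have hθpos := θd_pos lam t
  obtain ⟨w, hwlen, hf⟩ := hS
  obtain ⟨x, i, hper⟩ := factor_pointwise hwlen hf
  set α := alp lam with halp
  set δ := Int.fract ((m:ℝ) * α) with hδ
  have hδ0 : 0 ≤ δ := Int.fract_nonneg _
  have hδ1 : δ < 1 := Int.fract_lt_one _
  have hθm : θd lam t ≤ δ := by
    have hba := best_approx lam t ht m hm hmq ⌊(m:ℝ)*α⌋
    have h21 : |(m:ℝ)*α - (⌊(m:ℝ)*α⌋:ℝ)| = δ := by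
      rw [hδ, Int.fract, abs_of_nonneg]
      exact Int.fract_nonneg _
    rw [h21] at hba
    exact hba
  have hθ1m : θd lam t ≤ 1 - δ := by
    have hba := best_approx lam t ht m hm hmq (⌊(m:ℝ)*α⌋ + 1)
    have h21 : |(m:ℝ)*α - ((⌊(m:ℝ)*α⌋ + 1 : ℤ):ℝ)| = 1 - δ := by
      have h22 : (m:ℝ)*α - ((⌊(m:ℝ)*α⌋ + 1 : ℤ):ℝ) = δ - 1 := by
        rw [hδ, Int.fract]; push_cast; ring
      rw [h22, abs_of_nonpos (by linarith)]
      ring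
    rw [h21] at hba
    exact hba
  have hθα : θd lam t ≤ α := by
    have h23 := θd_anti lam ht
    rw [θd_one] at h23
    exact h23
  set c := 1 - α with hc
  set β₀ := max c (1 - δ) with hβ
  have hcθ : θd lam t ≤ c := by rw [hc]; linarith
  have hβ₀0 : 0 < β₀ := lt_of_lt_of_le (by rw [hc]; linarith) (le_max_left _ _)
  have hβ₀1 : β₀ + θd lam t ≤ 1 := by
    have h24 : β₀ ≤ 1 - θd lam t := max_le (by rw [hc]; linarith) (by linarith)
    linarith
  have hβc : β₀ + θd lam t ≤ c + 1 - δ := by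
    have h25 : β₀ ≤ c + 1 - δ - θd lam t := max_le (by linarith) (by linarith)
    linarith
  have havoid : ∀ j, j + m < n*m →
      ¬ (β₀ ≤ Int.fract (((i+j:ℕ):ℝ)*α + x) ∧
         Int.fract (((i+j:ℕ):ℝ)*α + x) < β₀ + θd lam t) := by
    rintro j hj ⟨hz1, hz2⟩
    set z := Int.fract (((i+j:ℕ):ℝ)*α + x) with hzd
    have hz3 : z < 1 := Int.fract_lt_one _
    have hcz : c ≤ z := le_trans (le_max_left _ _) hz1
    have hdz : 1 - δ ≤ z := le_trans (le_max_right _ _) hz1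
    have hL1 : sturmianLetter α x (i+j) = 1 := by
      rw [letter_eq_ite hα0 (by linarith) x (i+j), if_pos]
      rw [← hzd]
      rw [hc] at hcz
      exact hcz
    have hfr : Int.fract ((((i+j+m):ℕ):ℝ)*α + x) = z + δ - 1 := by
      have e3 : ((((i+j+m):ℕ)):ℝ)*α + x = ((((i+j:ℕ)):ℝ)*α + x) + (m:ℝ)*α := by
        push_cast; ring
      rw [e3, fract_add_fract, ← hzd, ← hδ]
      have h26 : z + δ = (z + δ - 1) + ((1:ℤ):ℝ) := by push_cast; ring
      conv_lhs => rw [h26]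
      rw [Int.fract_add_intCast]
      have hg1 : (0:ℝ) ≤ z + δ - 1 := by linarith
      have hg2 : z + δ - 1 < 1 := by linarith
      exact Int.fract_eq_self.mpr ⟨hg1, hg2⟩
    have hL2 : sturmianLetter α x (i+j+m) = 0 := by
      rw [letter_eq_ite hα0 (by linarith) x (i+j+m), if_neg]
      rw [hfr, ← hc]
      push_neg
      linarith
    have h27 := hper j hj
    rw [hL1, hL2] at h27
    exact absurd h27 (by norm_num)
  by_contra hcon
  push_neg at hcon
  obtain ⟨j, k, hjB, hg1, hg2⟩ := gap_Ico lam t ht ((i:ℝ)*α + x - β₀)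
  have hjlt : j + m < n*m := by
    have h28 : j < (n-1)*m := lt_of_lt_of_le hjB hcon
    have h29 : (n-1)*m + m = n*m := by
      have : n - 1 + 1 = n := by omega
      calc (n-1)*m + m = (n-1+1)*m := by ring
      _ = n*m := by rw [this]
    omega
  apply havoid j hjlt
  set y := (((i+j:ℕ)):ℝ)*α + x with hy
  have h30 : y - (k:ℝ) = ((i:ℝ)*α + x - β₀) + (j:ℝ)*α - k + β₀ := by
    rw [hy]; push_cast; ring
  have h31 : β₀ ≤ y - k := by rw [h30]; linarith
  have h32 : y - k < β₀ + θd lam t := by rw [h30]; linarith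
  have h33 : Int.fract y = y - k := by
    rw [← Int.fract_sub_intCast y k]
    exact Int.fract_eq_self.mpr ⟨by linarith, by linarith⟩
  constructor
  · rw [h33]; exact h31
  · rw [h33]; exact h32

lemma Sset_le (m n : ℕ) (hm : 1 ≤ m) (hS : n ∈ Sset (alp lam) m)
    (t : ℕ) (ht : 1 ≤ t) (hmq : m < qd lam (t+1)) : n ≤ Bd lam t + 1 := by
  rcases le_or_gt n 1 with h | h
  · have hB := qd_pos_succ lam t
    have : 1 ≤ Bd lam t := by unfold Bd; omega
    omega
  · have h34 := upper_main lam t m n ht hm hmq h hS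
    have h35 : n - 1 ≤ (n-1)*m := Nat.le_mul_of_pos_right _ (by omega)
    omega

lemma Sset_bddAbove (m : ℕ) (hm : 1 ≤ m) : BddAbove (Sset (alp lam) m) := by
  refine ⟨Bd lam (m+1) + 1, fun n hn => ?_⟩
  apply Sset_le lam m n hm hn (m+1) (by omega)
  have := le_qd lam (m+1+1)
  omega

lemma E_mem (m : ℕ) (hm : 1 ≤ m) :
    maxPowerExponent (alp lam) m ∈ Sset (alp lam) m := by
  rw [maxPowerExponent_eq]
  exact Nat.sSup_mem ⟨0, zero_mem_Sset _ _⟩ (Sset_bddAbove lam m hm)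

/-! ### lower bound -/

lemma lower_main (t : ℕ) (ht : 1 ≤ t) :
    (qd lam (t+2) - 2) / qd lam (t+1) + 1 ∈ Sset (alp lam) (qd lam (t+1)) := by
  have hα0 := alp_pos lam
  have hα2 := alp_lt_half lam
  set α := alp lam with halp
  set τ := t + 1 with hτ
  set m := qd lam τ with hmdef
  set Q := qd lam (τ+1) with hQdef
  have hm1 : 1 ≤ m := qd_pos_succ lam t
  have hQ2 : 2 ≤ Q := by
    have h1 := qd_two lam
    have h2 := Ad_zero_two_le lam
    have h3 : qd lam 2 ≤ qd lam (τ+1) := (qd_strictMono lam).monotone (by omega)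
    omega
  set n := (Q - 2)/m + 1 with hndef
  have hn1 : 1 ≤ n := Nat.le_add_left 1 ((Q-2)/m)
  have h4 : n - 1 = (Q-2)/m := by rw [hndef, Nat.add_sub_cancel]
  have hnm : (n-1)*m ≤ Q - 2 := by
    rw [h4]
    exact Nat.div_mul_le_self (Q-2) m
  clear_value n
  have hτ1 : 1 ≤ τ := by omega
  have hθpos := θd_pos lam τ
  have hθα : θd lam τ ≤ α := by
    have h23 := θd_anti lam hτ1
    rw [θd_one] at h23
    exact h23
  have heps := eps_eq lam τ
  have hlet : ∀ k : ℕ, sturmianLetter α 0 k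
      = if 1 - α ≤ Int.fract ((k:ℝ)*α) then 1 else 0 := by
    intro k
    rw [letter_eq_ite hα0 (by linarith) 0 k, add_zero]
  have hfrα : Int.fract α = α := Int.fract_eq_self.mpr ⟨hα0.le, by linarith⟩
  have hfr1 : ∀ k : ℕ, Int.fract ((((k+1):ℕ):ℝ)*α)
      = Int.fract (Int.fract ((k:ℝ)*α) + α) := by
    intro k
    have e : (((k+1):ℕ):ℝ)*α = (k:ℝ)*α + α := by push_cast; ring
    rw [e, fract_add_fract, hfrα]
  have hfrm : ∀ k : ℕ, Int.fract ((((k+m):ℕ):ℝ)*α)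
      = Int.fract (Int.fract ((k:ℝ)*α) + Int.fract ((m:ℝ)*α)) := by
    intro k
    have e : (((k+m):ℕ):ℝ)*α = (k:ℝ)*α + (m:ℝ)*α := by push_cast; ring
    rw [e, fract_add_fract]
  have per : ∀ k : ℕ, 1 ≤ k → k + 1 < Q →
      sturmianLetter α 0 k = sturmianLetter α 0 (k+m) := by
    intro k hk1 hk2
    set z := Int.fract ((k:ℝ)*α) with hz
    have hz0 : 0 ≤ z := Int.fract_nonneg _
    have hz1 : z < 1 := Int.fract_lt_one _
    rcases Nat.even_or_odd (τ+1) with hev | hod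
    · -- epsilon = +theta : delta = theta
      have hepsA : (m:ℝ)*α - (pd lam τ : ℝ) = θd lam τ := by
        rw [hev.neg_one_pow, one_mul] at heps
        exact heps
      have hδ : Int.fract ((m:ℝ)*α) = θd lam τ := by
        have e : (m:ℝ)*α = θd lam τ + ((pd lam τ : ℤ):ℝ) := by push_cast; linarith
        rw [e, Int.fract_add_intCast]
        exact Int.fract_eq_self.mpr ⟨hθpos.le, by linarith⟩
      have condA : ∀ r : ℕ, 1 ≤ r → r < Q → Int.fract ((r:ℝ)*α) < 1 - θd lam τ := by
        intro r h1 h2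
        by_contra hcon
        push_neg at hcon
        have hf1 : Int.fract ((r:ℝ)*α) < 1 := Int.fract_lt_one _
        set s : ℤ := ⌊(r:ℝ)*α⌋ + 1 with hs
        have hrs : (r:ℝ)*α - s = Int.fract ((r:ℝ)*α) - 1 := by
          rw [hs, Int.fract]; push_cast; ring
        have hba := best_approx lam τ hτ1 r h1 h2 s
        have hnp : (r:ℝ)*α - s ≤ 0 := by rw [hrs]; linarith
        have habs : |(r:ℝ)*α - s| ≤ θd lam τ := by
          rw [abs_of_nonpos hnp, hrs]; linarith
        have heqq : (r:ℝ)*α - s = -(θd lam τ) := by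
          rw [abs_of_nonpos hnp] at hba
          linarith
        have hirr := alp_irrational lam
        rw [irrational_iff_ne_rational] at hirr
        refine hirr (s + pd lam τ) ((r:ℤ) + m) (by omega) ?_
        have hpos : (0:ℝ) < ((r:ℤ) + (m:ℤ) : ℤ) := by
          push_cast
          have : (1:ℝ) ≤ (r:ℝ) := by exact_mod_cast h1
          have : (1:ℝ) ≤ (m:ℝ) := by exact_mod_cast hm1
          linarith
        rw [eq_div_iff (by exact_mod_cast ne_of_gt hpos)]
        push_cast
        linear_combination heqq + hepsA
      have hA1 : z < 1 - θd lam τ := by rw [hz]; exact condA k hk1 (by omega)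
      have hA2 : Int.fract (z + α) < 1 - θd lam τ := by
        have h5 := condA (k+1) (by omega) hk2
        rw [hfr1 k] at h5
        rw [hz]
        exact h5
      have hfrm2 : Int.fract ((((k+m):ℕ):ℝ)*α) = z + θd lam τ := by
        rw [hfrm k, hδ, ← hz]
        exact Int.fract_eq_self.mpr ⟨by linarith, by linarith⟩
      rw [hlet k, hlet (k+m), hfrm2, ← hz]
      split_ifs with h1 h2 h2
      · rfl
      · exfalso; exact h2 (by linarith)
      · exfalso
        have hfz : Int.fract (z + α) = z + α := by
          apply Int.fract_eq_self.mpr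
          constructor
          · linarith
          · push_neg at h1; linarith
        rw [hfz] at hA2
        push_neg at h1
        linarith
      · rfl
    · -- epsilon = -theta : delta = 1 - theta
      have hepsB : (m:ℝ)*α - (pd lam τ : ℝ) = -(θd lam τ) := by
        rw [hod.neg_one_pow, neg_one_mul] at heps
        exact heps
      have hδ : Int.fract ((m:ℝ)*α) = 1 - θd lam τ := by
        have e : (m:ℝ)*α = (1 - θd lam τ) + ((pd lam τ - 1 : ℤ):ℝ) := by
          push_cast; linarith
        rw [e, Int.fract_add_intCast]
        exact Int.fract_eq_self.mpr ⟨by linarith, by linarith⟩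
      have condB : ∀ r : ℕ, 1 ≤ r → r < Q → θd lam τ ≤ Int.fract ((r:ℝ)*α) := by
        intro r h1 h2
        by_contra hcon
        push_neg at hcon
        set s : ℤ := ⌊(r:ℝ)*α⌋ with hs
        have hrs : (r:ℝ)*α - s = Int.fract ((r:ℝ)*α) := by
          rw [hs, Int.fract]
        have hba := best_approx lam τ hτ1 r h1 h2 s
        rw [hrs, abs_of_nonneg (Int.fract_nonneg _)] at hba
        linarith
      have hB1 : θd lam τ ≤ z := by rw [hz]; exact condB k hk1 (by omega)
      have hB2 : θd lam τ ≤ Int.fract (z + α) := by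
        have h5 := condB (k+1) (by omega) hk2
        rw [hfr1 k] at h5
        rw [hz]
        exact h5
      have hfrm2 : Int.fract ((((k+m):ℕ):ℝ)*α) = z - θd lam τ := by
        rw [hfrm k, hδ, ← hz]
        have e : z + (1 - θd lam τ) = (z - θd lam τ) + ((1:ℤ):ℝ) := by push_cast; ring
        rw [e, Int.fract_add_intCast]
        exact Int.fract_eq_self.mpr ⟨by linarith, by linarith⟩
      rw [hlet k, hlet (k+m), hfrm2, ← hz]
      split_ifs with h1 h2 h2
      · rfl
      · exfalso
        push_neg at h2
        have hfz : Int.fract (z + α) = z + α - 1 := by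
          have e : z + α = (z + α - 1) + ((1:ℤ):ℝ) := by push_cast; ring
          conv_lhs => rw [e]
          rw [Int.fract_add_intCast]
          apply Int.fract_eq_self.mpr
          constructor
          · linarith
          · linarith
        rw [hfz] at hB2
        linarith
      · exfalso
        push_neg at h1
        have := hθpos
        linarith
      · rfl
  -- assemble the power word
  set g : ℕ → ℤ := fun j => sturmianLetter α 0 (1+j) with hg
  have hnm1 : (n-1)*m + m = n*m := by
    have h6 : n - 1 + 1 = n := by omega
    calc (n-1)*m + m = (n-1+1)*m := by ring
    _ = n*m := by rw [h6]
  have hper' : ∀ j, j + m < n*m → g j = g (j+m) := by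
    intro j hj
    have hj' : j < (n-1)*m := by omega
    have hk2 : (1+j) + 1 < Q := by omega
    have h7 := per (1+j) (by omega) hk2
    have e : 1+(j+m) = (1+j)+m := by omega
    rw [hg]
    simp only []
    rw [e]
    exact h7
  refine ⟨(List.range m).map g, by simp, 0, 1, ?_⟩
  have hlen : ((List.replicate n ((List.range m).map g)).flatten).length = n*m := by
    rw [length_flatten_replicate]; simp
  rw [hlen, flatten_replicate_map_range]
  apply List.map_congr_left
  intro a ha
  have ham := List.mem_range.mp ha
  have h8 := periodic_mod hm1 hper' a ham
  rw [h8]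

/-! ### asymptotics -/

lemma Ad_lower (hlam : 0 ≤ lam) (t : ℕ) (ht : 1 ≤ t) :
    lam * qd lam (t+1) ≤ (Ad lam t : ℝ) := by
  have h1 : Ad lam t = max 1 ⌈lam * (qd lam (t+1) : ℝ)⌉₊ := by
    unfold Ad coefA
    rw [if_neg (by omega)]
  have h2 : lam * qd lam (t+1) ≤ (⌈lam * (qd lam (t+1) : ℝ)⌉₊ : ℝ) := Nat.le_ceil _
  have h3 : (⌈lam * (qd lam (t+1) : ℝ)⌉₊ : ℝ) ≤ (Ad lam t : ℝ) := by
    rw [h1]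
    exact_mod_cast Nat.le_max_right 1 _
  linarith

lemma Ad_upper (hlam : 0 ≤ lam) (t : ℕ) (ht : 1 ≤ t) :
    (Ad lam t : ℝ) ≤ lam * qd lam (t+1) + 1 := by
  have h1 : Ad lam t = max 1 ⌈lam * (qd lam (t+1) : ℝ)⌉₊ := by
    unfold Ad coefA
    rw [if_neg (by omega)]
  have hx : 0 ≤ lam * (qd lam (t+1) : ℝ) := by positivity
  have h2 : (⌈lam * (qd lam (t+1) : ℝ)⌉₊ : ℝ) < lam * qd lam (t+1) + 1 :=
    Nat.ceil_lt_add_one hx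
  have h3 : (Ad lam t : ℝ) = max 1 (⌈lam * (qd lam (t+1) : ℝ)⌉₊ : ℝ) := by
    rw [h1]
    push_cast
    rfl
  rw [h3]
  apply max_le
  · linarith
  · linarith

lemma lower_rate (hlam : 0 ≤ lam) (t : ℕ) (ht : 1 ≤ t) :
    lam ≤ (maxPowerExponent (alp lam) (qd lam (t+1)) : ℝ) / qd lam (t+1) := by
  set m := qd lam (t+1) with hmdef
  set Q := qd lam (t+2) with hQdef
  have hm1 : 1 ≤ m := qd_pos_succ lam t
  have hmR : (0:ℝ) < m := by exact_mod_cast hm1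
  set n := (Q - 2)/m + 1 with hndef
  have hmem : n ∈ Sset (alp lam) m := lower_main lam t ht
  have hE : n ≤ maxPowerExponent (alp lam) m := by
    rw [maxPowerExponent_eq]
    exact le_csSup (Sset_bddAbove lam m hm1) hmem
  -- n*m ≥ Q - 1
  have hQ2 : 2 ≤ Q := by
    have h1 := qd_two lam
    have h2 := Ad_zero_two_le lam
    have h3 : qd lam 2 ≤ qd lam (t+2) := (qd_strictMono lam).monotone (by omega)
    omega
  have hkey : Q ≤ n*m + 1 := by
    have h5 := Nat.div_add_mod (Q-2) m
    have h6 : (Q-2) % m < m := Nat.mod_lt _ (by omega)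
    have h7 : n*m = (Q-2)/m*m + m := by rw [hndef]; ring
    have h8 : (Q-2)/m*m + (Q-2)%m = Q-2 := by
      rw [Nat.mul_comm] at h5
      exact h5
    omega
  -- Q ≥ lam m^2 + 1
  have hQlow : lam * m * m + 1 ≤ (Q:ℝ) := by
    have h9 : (Q:ℝ) = (Ad lam t : ℝ) * m + qd lam t := by
      rw [hQdef]
      exact_mod_cast congrArg (fun x : ℕ => (x:ℝ)) (qd_rec lam t)
    have h10 := Ad_lower lam hlam t ht
    have h11 : (1:ℝ) ≤ qd lam t := by
      obtain ⟨u, rfl⟩ : ∃ u, t = u+1 := ⟨t-1, by omega⟩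
      exact_mod_cast qd_pos_succ lam u
    rw [h9]
    have h12 : lam * m * m ≤ (Ad lam t : ℝ) * m :=
      mul_le_mul_of_nonneg_right (by rw [hmdef]; exact h10) hmR.le
    linarith
  have hnR : lam * m ≤ (n:ℝ) := by
    have h13 : (Q:ℝ) ≤ (n:ℝ)*m + 1 := by exact_mod_cast hkey
    have h14 : lam * m * m ≤ (n:ℝ) * m := by linarith
    have := le_of_mul_le_mul_right (by linarith : (lam * m) * m ≤ (n:ℝ) * m) hmR
    exact this
  have hER : (n:ℝ) ≤ (maxPowerExponent (alp lam) m : ℝ) := by exact_mod_cast hE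
  rw [le_div_iff₀ hmR]
  linarith

lemma upper_rate (hlam : 0 ≤ lam) (t m : ℕ) (ht : 1 ≤ t)
    (h1 : qd lam (t+1) ≤ m) (h2 : m < qd lam (t+2)) :
    (maxPowerExponent (alp lam) m : ℝ) / m ≤ lam + 10 / qd lam (t+1) := by
  set q := qd lam (t+1) with hqdef
  have hq1 : 1 ≤ q := qd_pos_succ lam t
  have hqR : (0:ℝ) < q := by exact_mod_cast hq1
  have hm1 : 1 ≤ m := le_trans hq1 h1
  have hmR : (0:ℝ) < m := by exact_mod_cast hm1
  have hqmR : (q:ℝ) ≤ m := by exact_mod_cast h1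
  set E := maxPowerExponent (alp lam) m with hEdef
  have hmemE := E_mem lam m hm1
  rcases le_or_gt E 1 with hE1 | hE2
  · have hE0 : (E:ℝ) ≤ 1 := by exact_mod_cast hE1
    have h3 : (E:ℝ)/m ≤ 1/m := by gcongr
    have h4 : (1:ℝ)/m ≤ 10/q := by
      rw [div_le_div_iff₀ hmR hqR]
      nlinarith
    have h5 : (0:ℝ) ≤ lam := hlam
    linarith
  · have hup := upper_main lam (t+1) m E (by omega) hm1 h2 hE2 hmemE
    -- (E-1)*m < Bd (t+1)
    have hEB : ((E:ℝ) - 1) * m ≤ (Bd lam (t+1) : ℝ) := by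
      have h6 : ((E-1 : ℕ):ℝ) * m ≤ (Bd lam (t+1):ℝ) := by
        have := hup.le
        exact_mod_cast Nat.cast_le.mpr this
      have h7 : ((E-1:ℕ):ℝ) = (E:ℝ) - 1 := by
        have : 1 ≤ E := by omega
        push_cast [this]
        ring
      rw [h7] at h6
      exact h6
    -- Bd bound
    have hBd : (Bd lam (t+1) : ℝ) ≤ lam * q^2 + 9*q := by
      have h8 : Bd lam (t+1) = qd lam (t+2) + 4 * qd lam (t+1) + 3 * qd lam t := by
        unfold Bd
        simp
      have h9 : (qd lam (t+2):ℝ) = (Ad lam t:ℝ) * q + qd lam t := by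
        exact_mod_cast congrArg (fun x : ℕ => (x:ℝ)) (qd_rec lam t)
      have h10 := Ad_upper lam hlam t ht
      have h11 : (qd lam t : ℝ) ≤ q := by
        exact_mod_cast (qd_strictMono lam).monotone (by omega : t ≤ t+1)
      have h12 : (Bd lam (t+1):ℝ) = (qd lam (t+2):ℝ) + 4*q + 3*(qd lam t:ℝ) := by
        rw [h8]; push_cast; ring
      have h13 : (Ad lam t:ℝ) * q ≤ (lam * q + 1) * q :=
        mul_le_mul_of_nonneg_right (by exact h10) hqR.le
      rw [h12, h9]
      nlinarith
    have hkey : (E:ℝ) * q ≤ lam * m * q + 10 * m := by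
      have hE1R : (1:ℝ) ≤ (E:ℝ) := by
        have : (1:ℕ) ≤ E := by omega
        exact_mod_cast this
      have p1 : ((E:ℝ)-1)*q ≤ ((E:ℝ)-1)*m :=
        mul_le_mul_of_nonneg_left hqmR (by linarith)
      have p3 : lam * q^2 ≤ lam * (m*q) := by
        have : (q:ℝ)^2 ≤ m*q := by nlinarith
        exact mul_le_mul_of_nonneg_left this hlam
      nlinarith
    rw [div_le_iff₀ hmR]
    have hrw : (lam + 10/(q:ℝ)) * m = (lam * m * q + 10*m)/q := by
      field_simp
    rw [hrw, le_div_iff₀ hqR]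
    nlinarith

lemma window (m : ℕ) (hm : 1 ≤ m) :
    ∃ t, qd lam (t+1) ≤ m ∧ m < qd lam (t+2) := by
  classical
  have hex : ∃ s, m < qd lam (s+2) := ⟨m, by have := le_qd lam (m+2); omega⟩
  set t := Nat.find hex with htdef
  have h1 : m < qd lam (t+2) := Nat.find_spec hex
  have h2 : qd lam (t+1) ≤ m := by
    rcases Nat.eq_zero_or_pos t with h | h
    · rw [h]
      show qd lam 1 ≤ m
      rw [qd_one lam]
      exact hm
    · have h3 := Nat.find_min hex (show t-1 < t by omega)
      push_neg at h3
      have e : t - 1 + 2 = t + 1 := by omega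
      rw [e] at h3
      exact h3
  exact ⟨t, h2, h1⟩

lemma event_up (hlam : 0 ≤ lam) (ε : ℝ) (hε : 0 < ε) :
    ∀ᶠ m in Filter.atTop, (maxPowerExponent (alp lam) m : ℝ) / m ≤ lam + ε := by
  set T := max 1 ⌈(10:ℝ)/ε⌉₊ with hTdef
  have hT1 : 1 ≤ T := le_max_left _ _
  have hT2 : (10:ℝ)/ε ≤ T := by
    have := Nat.le_ceil ((10:ℝ)/ε)
    have h1 : (⌈(10:ℝ)/ε⌉₊:ℝ) ≤ T := by exact_mod_cast Nat.le_max_right 1 _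
    linarith
  filter_upwards [Filter.eventually_ge_atTop (qd lam (T+1))] with m hm
  have hm1 : 1 ≤ m := le_trans (qd_pos_succ lam T) hm
  obtain ⟨t, hw1, hw2⟩ := window lam m hm1
  have htT : T ≤ t := by
    have h2 : qd lam (T+1) < qd lam (t+2) := by omega
    have h3 : T + 1 < t + 2 := (qd_strictMono lam).lt_iff_lt.mp h2
    omega
  have ht1 : 1 ≤ t := le_trans hT1 htT
  have h4 := upper_rate lam hlam t m ht1 hw1 hw2
  have h5 : (10:ℝ)/(qd lam (t+1):ℝ) ≤ ε := by
    have h6 : (T:ℝ) ≤ qd lam (t+1) := by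
      have h7 : T + 1 ≤ qd lam (t+1) := by
        have := le_qd lam (t+1)
        omega
      exact_mod_cast le_trans (by omega : T ≤ T+1) h7
    have h8 : (10:ℝ)/ε ≤ qd lam (t+1) := le_trans hT2 h6
    have hq := qd_cast_pos lam t
    rw [div_le_iff₀ hq]
    rw [div_le_iff₀ hε] at h8
    linarith
  linarith

lemma freq_low (hlam : 0 ≤ lam) :
    ∃ᶠ m in Filter.atTop, lam ≤ (maxPowerExponent (alp lam) m : ℝ) / m := by
  rw [Filter.frequently_atTop]
  intro N
  set K := max N 1 with hKdef
  refine ⟨qd lam (K+1), ?_, ?_⟩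
  · have := le_qd lam (K+1)
    omega
  · exact lower_rate lam hlam K (le_max_right _ _)

/-! ### main theorem -/

lemma limsup_eq (hlam : 0 ≤ lam) :
    Filter.limsup (fun m : ℕ => (maxPowerExponent (alp lam) m : ℝ) / (m : ℝ))
      Filter.atTop = lam := by
  set u : ℕ → ℝ := fun m => (maxPowerExponent (alp lam) m : ℝ) / (m : ℝ) with hu
  have hbdd : Filter.IsBoundedUnder (· ≤ ·) Filter.atTop u :=
    Filter.isBoundedUnder_of_eventually_le (a := lam + 1) (event_up lam hlam 1 one_pos)
  have hnn : ∀ m, 0 ≤ u m := by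
    intro m
    apply div_nonneg <;> positivity
  have hcb : Filter.IsCoboundedUnder (· ≤ ·) Filter.atTop u :=
    Filter.isCoboundedUnder_le_of_eventually_le Filter.atTop
      (Filter.Eventually.of_forall hnn)
  have hub : Filter.limsup u Filter.atTop ≤ lam := by
    by_contra hcon
    push_neg at hcon
    set ε := (Filter.limsup u Filter.atTop - lam)/2 with hε
    have hε0 : 0 < ε := by rw [hε]; linarith
    have h1 := Filter.limsup_le_of_le hcb (event_up lam hlam ε hε0)
    rw [hε] at h1
    linarith
  have hlb : lam ≤ Filter.limsup u Filter.atTop :=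
    Filter.le_limsup_of_frequently_le (freq_low lam hlam) hbdd
  linarith

end CritExp

theorem every_nonneg_real_is_critical_exponent (lam : ℝ) (hlam : 0 ≤ lam) :
    ∃ α : ℝ, Irrational α ∧ α ∈ Set.Ioo (0:ℝ) 1 ∧
      Filter.limsup (fun m : ℕ => (maxPowerExponent α m : ℝ) / (m : ℝ)) Filter.atTop = lam := by
  refine ⟨CritExp.alp lam, CritExp.alp_irrational lam,
    ⟨CritExp.alp_pos lam, CritExp.alp_lt_one lam⟩, CritExp.limsup_eq lam hlam⟩
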